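/- Let ρ be a causal realisation of a family of configurations F with carrier (R,≤) and let f₁ : ρ → ρ₀ be a projection whose carrier R₀ is not a down-closed subset of R. Then f₁ factors as f₁ = g₁ ∘ g₂ where g₂ : ρ → ρ' is a total map of realisations that is not an isomorphism and g₁ : ρ' → ρ₀ is a projection. -/

import Mathlib

universe u v w

/-- The image of a set under a partial function. -/
def pimage {α : Type u} {β : Type v} (f : α → Option β) (x : Set α) : Set β :=
  {b | ∃ a ∈ x, f a = some b}

/-- A family of configurations over the set of events `A`:
a non-empty family of subsets, whose underlying set is all of `A`,
closed under unions of finitely compatible subfamilies,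
and satisfying the securing-chain condition. -/
structure ConfigFamily (A : Type u) where
  F : Set (Set A)
  nonempty : F.Nonempty
  covers : ∀ a : A, ∃ x ∈ F, a ∈ x
  unionClosed : ∀ X ⊆ F, (∀ Y ⊆ X, Y.Finite → ∃ z ∈ F, ∀ y ∈ Y, y ⊆ z) → ⋃₀ X ∈ F
  secured : ∀ x ∈ F, ∀ e ∈ x, ∃ l : List A, l ≠ [] ∧ l.getLast? = some e ∧
    (∀ a ∈ l, a ∈ x) ∧ ∀ i, 0 < i → i ≤ l.length → {a | a ∈ l.take i} ∈ F

/-- A causal realisation of the family `C`: a partial order whose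
principal lower sets are finite, together with a function to events
sending every down-closed subset to a configuration of the family. -/
structure Realisation {A : Type u} (C : ConfigFamily A) where
  carrier : Type u
  le : carrier → carrier → Prop
  le_refl : ∀ a, le a a
  le_trans : ∀ a b c, le a b → le b c → le a c
  le_antisymm : ∀ a b, le a b → le b a → a = b
  finPast : ∀ e, {e' | le e' e}.Finite
  ρ : carrier → A
  real : ∀ x : Set carrier, (∀ a ∈ x, ∀ b, le b a → b ∈ x) → ρ '' x ∈ C.F

namespace Realisation

variable {A : Type u} {C : ConfigFamily A}

/-- Down-closed subsets of the carrier of a realisation. -/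
def IsDown (r : Realisation C) (x : Set r.carrier) : Prop :=
  ∀ a ∈ x, ∀ b, r.le b a → b ∈ x

/-- The set `[a) = [a] \ {a}` of strict predecessors. -/
def spred (r : Realisation C) (a : r.carrier) : Set r.carrier :=
  {b | r.le b a ∧ b ≠ a}

/-- The carrier has a top element. -/
def HasTop (r : Realisation C) : Prop := ∃ t, ∀ a, r.le a t

end Realisation

/-- A map of realisations: a partial surjective function between the carriers,
preserving down-closed subsets and commuting with the functions to events. -/
structure RealMap {A : Type u} {C : ConfigFamily A} (r r' : Realisation C) where
  f : r.carrier → Option r'.carrier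
  surj : ∀ b, ∃ a, f a = some b
  presDown : ∀ x, r.IsDown x → r'.IsDown (pimage f x)
  commutes : ∀ a b, f a = some b → r.ρ a = r'.ρ b

namespace RealMap

variable {A : Type u} {C : ConfigFamily A} {r r' r₀ : Realisation C}

/-- The map is total. -/
def IsTotal (m : RealMap r r') : Prop := ∀ a, ∃ b, m.f a = some b

/-- The map is an isomorphism of realisations: it has an inverse map of
realisations, given by the inverse relation. -/
def IsIso (m : RealMap r r') : Prop :=
  ∃ m' : RealMap r' r, ∀ a b, m.f a = some b ↔ m'.f b = some a

/-- `m : r → r₀` is a projection witnessed by `g`: `g` realises the carrier of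
`r₀` as a subset of the carrier of `r` with the restricted order and restricted
function to events, and `m` is the inverse relation of this inclusion. -/
def IsProjectionVia (m : RealMap r r₀) (g : r₀.carrier → r.carrier) : Prop :=
  Function.Injective g ∧ (∀ a b, r₀.le a b ↔ r.le (g a) (g b)) ∧
    (∀ a, r₀.ρ a = r.ρ (g a)) ∧ (∀ a b, m.f a = some b ↔ g b = a)

/-- `m` is a projection. -/
def IsProjection (m : RealMap r r₀) : Prop := ∃ g, m.IsProjectionVia g

end RealMap

/-- A realisation is extremal when every total map of realisations from it
is an isomorphism. -/
def Realisation.Extremal {A : Type u} {C : ConfigFamily A} (r : Realisation C) : Prop :=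
  ∀ (r' : Realisation C) (m : RealMap r r'), m.IsTotal → m.IsIso

/-- A prime extremal realisation: extremal with a top element. -/
def Realisation.PrimeExtremal {A : Type u} {C : ConfigFamily A} (r : Realisation C) : Prop :=
  r.Extremal ∧ r.HasTop

/-- Isomorphism of realisations. -/
def RealIso {A : Type u} {C : ConfigFamily A} (r r' : Realisation C) : Prop :=
  ∃ m : RealMap r r', m.IsIso

/-- `m` is the composite of `m₁` followed by `m₂` (as partial functions). -/
def CompEq {A : Type u} {C : ConfigFamily A} {r r' r'' : Realisation C}
    (m₁ : RealMap r r') (m₂ : RealMap r' r'') (m : RealMap r r'') : Prop :=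
  ∀ a c, m.f a = some c ↔ ∃ b, m₁.f a = some b ∧ m₂.f b = some c

section AuxStmt3

variable {A : Type u} {C : ConfigFamily A}

/-- The weakened order: drop relations from outside `V` into `V`. -/
def auxLe (r : Realisation C) (V : Set r.carrier) (a b : r.carrier) : Prop :=
  (a ∈ V ∧ b ∈ V ∧ r.le a b) ∨ (r.le a b ∧ b ∉ V)

theorem auxLe_le {r : Realisation C} {V : Set r.carrier} {a b : r.carrier}
    (h : auxLe r V a b) : r.le a b := by
  rcases h with ⟨_, _, h⟩ | ⟨h, _⟩ <;> exact h

theorem auxLe_refl (r : Realisation C) (V : Set r.carrier) (a : r.carrier) :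
    auxLe r V a a := by
  by_cases h : a ∈ V
  · exact Or.inl ⟨h, h, r.le_refl a⟩
  · exact Or.inr ⟨r.le_refl a, h⟩

theorem auxLe_trans (r : Realisation C) (V : Set r.carrier) (a b c : r.carrier)
    (hab : auxLe r V a b) (hbc : auxLe r V b c) : auxLe r V a c := by
  rcases hbc with ⟨hbV, hcV, hbc⟩ | ⟨hbc, hcV⟩
  · rcases hab with ⟨haV, _, hab⟩ | ⟨hab, hbV'⟩
    · exact Or.inl ⟨haV, hcV, r.le_trans _ _ _ hab hbc⟩
    · exact absurd hbV hbV'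
  · exact Or.inr ⟨r.le_trans _ _ _ (auxLe_le hab) hbc, hcV⟩

/-- The modified realisation. -/
noncomputable def auxReal (r r₀ : Realisation C) (g : r₀.carrier → r.carrier)
    (hord : ∀ a b, r₀.le a b ↔ r.le (g a) (g b))
    (hρ : ∀ a, r₀.ρ a = r.ρ (g a)) : Realisation C where
  carrier := r.carrier
  le := auxLe r (Set.range g)
  le_refl := auxLe_refl r _
  le_trans := auxLe_trans r _
  le_antisymm := fun a b h h' => r.le_antisymm a b (auxLe_le h) (auxLe_le h')
  finPast := fun e => (r.finPast e).subset (fun b hb => auxLe_le hb)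
  ρ := r.ρ
  real := by
    intro x hx
    set V : Set r.carrier := Set.range g with hV
    -- the down-closure of x and its configuration
    have hWdown : ∀ a ∈ {b | ∃ c ∈ x, r.le b c}, ∀ b, r.le b a → b ∈ {b | ∃ c ∈ x, r.le b c} := by
      rintro a ⟨c, hc, hac⟩ b hba
      exact ⟨c, hc, r.le_trans _ _ _ hba hac⟩
    have hW : r.ρ '' {b | ∃ c ∈ x, r.le b c} ∈ C.F := r.real _ hWdown
    -- the family of pieces
    set X : Set (Set A) :=
      insert (r.ρ '' (x ∩ V)) {s | ∃ a, a ∈ x ∧ a ∉ V ∧ s = r.ρ '' {b | r.le b a}} with hX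
    have hxV : r.ρ '' (x ∩ V) ∈ C.F := by
      have hy : ∀ c ∈ {c | g c ∈ x}, ∀ d, r₀.le d c → d ∈ {c | g c ∈ x} := by
        intro c hc d hdc
        exact hx (g c) hc (g d) (Or.inl ⟨⟨d, rfl⟩, ⟨c, rfl⟩, (hord d c).mp hdc⟩)
      have h0 := r₀.real _ hy
      have : r.ρ '' (x ∩ V) = r₀.ρ '' {c | g c ∈ x} := by
        ext e
        constructor
        · rintro ⟨a, ⟨hax, c, rfl⟩, rfl⟩
          exact ⟨c, hax, hρ c⟩
        · rintro ⟨c, hc, rfl⟩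
          exact ⟨g c, ⟨hc, ⟨c, rfl⟩⟩, (hρ c).symm⟩
      rwa [this]
    have hXF : X ⊆ C.F := by
      intro s hs
      rcases hs with rfl | ⟨a, hax, haV, rfl⟩
      · exact hxV
      · exact r.real _ (fun b hb c hcb => r.le_trans _ _ _ hcb hb)
    have hbdd : ∀ Y ⊆ X, Y.Finite → ∃ z ∈ C.F, ∀ y ∈ Y, y ⊆ z := by
      intro Y hY _
      refine ⟨_, hW, ?_⟩
      intro y hy
      rcases hY hy with rfl | ⟨a, hax, haV, rfl⟩
      · exact Set.image_mono (fun b hb => ⟨b, hb.1, r.le_refl b⟩)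
      · exact Set.image_mono (fun b hb => ⟨a, hax, hb⟩)
    have hu := C.unionClosed X hXF hbdd
    have : ⋃₀ X = r.ρ '' x := by
      apply Set.Subset.antisymm
      · intro e he
        rcases he with ⟨s, hs, hes⟩
        rcases hs with rfl | ⟨a, hax, haV, rfl⟩
        · exact Set.image_mono Set.inter_subset_left hes
        · refine Set.image_mono ?_ hes
          intro b hb
          exact hx a hax b (Or.inr ⟨hb, haV⟩)
      · rintro e ⟨a, hax, rfl⟩
        by_cases haV : a ∈ V
        · exact ⟨_, Or.inl rfl, ⟨a, ⟨hax, haV⟩, rfl⟩⟩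
        · exact ⟨_, Or.inr ⟨a, hax, haV, rfl⟩, ⟨a, r.le_refl a, rfl⟩⟩
    rwa [this] at hu

end AuxStmt3

/-- A projection whose carrier is not down-closed factors as a non-isomorphism
total map followed by a projection. -/
theorem stmt3 {A : Type u} (C : ConfigFamily A) (r r₀ : Realisation C)
    (f₁ : RealMap r r₀) (g : r₀.carrier → r.carrier) (hg : f₁.IsProjectionVia g)
    (hnotdown : ¬ r.IsDown (Set.range g)) :
    ∃ (r' : Realisation C) (g₂ : RealMap r r') (g₁ : RealMap r' r₀),
      g₂.IsTotal ∧ ¬ g₂.IsIso ∧ g₁.IsProjection ∧ CompEq g₂ g₁ f₁ := by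
  obtain ⟨ginj, gord, gρ, gdef⟩ := hg
  rw [Realisation.IsDown] at hnotdown
  push_neg at hnotdown
  obtain ⟨a₀, ha₀V, b₀, hb₀a₀, hb₀V⟩ := hnotdown
  have pinv := Function.partialInv_of_injective ginj
  refine ⟨auxReal r r₀ g gord gρ,
    { f := fun a => some a
      surj := fun b => ⟨b, rfl⟩
      presDown := by
        intro x hx a ha b hba
        obtain ⟨a', ha', h⟩ := ha
        injection h with h; subst h
        exact ⟨b, hx a' ha' b (auxLe_le hba), rfl⟩
      commutes := by
        intro a b h
        injection h with h; subst h; rfl },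
    { f := Function.partialInv g
      surj := fun c => ⟨g c, Function.partialInv_left ginj c⟩
      presDown := by
        intro x hx c hc d hdc
        obtain ⟨a, hax, hpa⟩ := hc
        have hga : g c = a := (pinv c a).mp hpa
        subst hga
        have hgd : g d ∈ x :=
          hx (g c) hax (g d) (Or.inl ⟨⟨d, rfl⟩, ⟨c, rfl⟩, (gord d c).mp hdc⟩)
        exact ⟨g d, hgd, Function.partialInv_left ginj d⟩
      commutes := by
        intro a c h
        have hga : g c = a := (pinv c a).mp h
        subst hga
        exact (gρ c).symm },
    fun a => ⟨a, rfl⟩, ?_, ?_, ?_⟩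
  · -- not an iso
    rintro ⟨m', hm'⟩
    have hid : ∀ b, m'.f b = some b := fun b => (hm' b b).mp rfl
    have hxdown : (auxReal r r₀ g gord gρ).IsDown {c | auxLe r (Set.range g) c a₀} :=
      fun c hc d hdc => auxLe_trans r _ d c a₀ hdc hc
    have hdown := m'.presDown _ hxdown
    have ha₀ : a₀ ∈ pimage m'.f {c | auxLe r (Set.range g) c a₀} :=
      ⟨a₀, Or.inl ⟨ha₀V, ha₀V, r.le_refl a₀⟩, hid a₀⟩
    obtain ⟨c, hcx, hc⟩ := hdown a₀ ha₀ b₀ hb₀a₀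
    have hbc : c = b₀ := by injection (hid c).symm.trans hc
    subst hbc
    rcases hcx with ⟨hbV, _, _⟩ | ⟨_, haV⟩
    · exact hb₀V hbV
    · exact haV ha₀V
  · -- projection
    refine ⟨g, ginj, ?_, gρ, fun a b => pinv b a⟩
    intro a b
    constructor
    · intro h
      exact Or.inl ⟨⟨a, rfl⟩, ⟨b, rfl⟩, (gord a b).mp h⟩
    · intro h
      exact (gord a b).mpr (auxLe_le h)
  · -- CompEq
    intro a c
    constructor
    · intro h
      exact ⟨a, rfl, (pinv c a).mpr ((gdef a c).mp h)⟩
    · rintro ⟨b, hb, h2⟩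
      injection hb with hb; subst hb
      exact (gdef a c).mpr ((pinv c a).mp h2)
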